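/- Let p be prime, k < p, G = (ℤ/pℤ)^k written multiplicatively with generators x_1,…,x_k, and let 0 ≤ b_1 < … < b_k ≤ p-1. In the group algebra 𝔽_p[G], the determinant of the k×k matrix N_β with entries N_β(i,j) = x_i^{-b_j} equals w_β · ∏_{1≤i<j≤k}(x_i - x_j), where w_β is a unit of 𝔽_p[G]. -/

import Mathlib

open MvPolynomial Finset



/-- A product of pairwise non-associated primes, each dividing `n`, divides `n`. -/
theorem auxGV_prod_primes_dvd {α ι : Type*} [CommMonoidWithZero α] [IsCancelMulZero α]
    (s : Finset ι) (f : ι → α) :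
    (∀ i ∈ s, Prime (f i)) →
    (∀ i ∈ s, ∀ j ∈ s, i ≠ j → ¬ Associated (f i) (f j)) →
    ∀ n : α, (∀ i ∈ s, f i ∣ n) → ∏ i ∈ s, f i ∣ n := by
  classical
  induction s using Finset.cons_induction with
  | empty => intro _ _ n _; simp
  | cons a s ha ih =>
    intro hp hpa n hd
    obtain ⟨m, rfl⟩ := hd a (Finset.mem_cons_self a s)
    rw [Finset.prod_cons]
    have hm : ∀ i ∈ s, f i ∣ m := by
      intro i hi
      have h1 : f i ∣ f a * m := hd i (Finset.mem_cons_of_mem hi)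
      rcases (hp i (Finset.mem_cons_of_mem hi)).2.2 _ _ h1 with h | h
      · exact absurd ((hp i (Finset.mem_cons_of_mem hi)).associated_of_dvd
            (hp a (Finset.mem_cons_self a s)) h)
          (hpa i (Finset.mem_cons_of_mem hi) a (Finset.mem_cons_self a s)
            (fun he => ha (he ▸ hi)))
      · exact h
    exact mul_dvd_mul_left _ (ih (fun i hi => hp i (Finset.mem_cons_of_mem hi))
      (fun i hi j hj => hpa i (Finset.mem_cons_of_mem hi) j (Finset.mem_cons_of_mem hj)) m hm)


noncomputable def auxGV_eI {F : Type*} [CommSemiring F] {k : ℕ} (i : Fin k) :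
    MvPolynomial (Fin k) F ≃ₐ[F] Polynomial (MvPolynomial {m : Fin k // m ≠ i} F) :=
  (renameEquiv F (Equiv.optionSubtypeNe i).symm).trans (optionEquivLeft F {m : Fin k // m ≠ i})

theorem auxGV_eI_X_self {F : Type*} [CommSemiring F] {k : ℕ} (i : Fin k) :
    auxGV_eI (F := F) i (X i) = Polynomial.X := by
  simp [auxGV_eI, AlgEquiv.trans_apply, renameEquiv_apply, rename_X,
    Equiv.optionSubtypeNe_symm_self, optionEquivLeft_X_none]

theorem auxGV_eI_X_ne {F : Type*} [CommSemiring F] {k : ℕ} (i m : Fin k) (hm : m ≠ i) :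
    auxGV_eI (F := F) i (X m) = Polynomial.C (X ⟨m, hm⟩) := by
  simp [auxGV_eI, AlgEquiv.trans_apply, renameEquiv_apply, rename_X,
    Equiv.optionSubtypeNe_symm_of_ne hm, optionEquivLeft_X_some]

theorem auxGV_prime {F : Type*} [Field F] {k : ℕ} (i j : Fin k) (hij : i ≠ j) :
    Prime (X i - X j : MvPolynomial (Fin k) F) := by
  rw [← MulEquiv.prime_iff (auxGV_eI (F := F) i).toMulEquiv]
  show Prime (auxGV_eI (F := F) i (X i - X j))
  rw [map_sub, auxGV_eI_X_self, auxGV_eI_X_ne i j hij.symm]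
  exact Polynomial.prime_X_sub_C _

theorem auxGV_nonassoc {F : Type*} [Field F] {k : ℕ} (i j i' j' : Fin k)
    (h1 : i < j) (h2 : i' < j')
    (hA : Associated (X i - X j : MvPolynomial (Fin k) F) (X i' - X j')) :
    i = i' ∧ j = j' := by
  classical
  by_cases hii : i = i'
  · subst hii
    refine ⟨rfl, ?_⟩
    have hA2 : Associated ((auxGV_eI (F := F) i) (X i - X j))
        ((auxGV_eI (F := F) i) (X i - X j')) := hA.map (auxGV_eI (F := F) i).toMulEquiv
    rw [map_sub, map_sub, auxGV_eI_X_self, auxGV_eI_X_ne i j h1.ne',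
      auxGV_eI_X_ne i j' h2.ne'] at hA2
    have := Polynomial.eq_of_monic_of_associated (Polynomial.monic_X_sub_C _)
      (Polynomial.monic_X_sub_C _) hA2
    have hc : (X (⟨j, h1.ne'⟩ : {m : Fin k // m ≠ i}) :
        MvPolynomial {m : Fin k // m ≠ i} F) = X ⟨j', h2.ne'⟩ := by
      have := sub_right_injective (congrArg id this)
      exact Polynomial.C_injective this
    have := MvPolynomial.X_injective hc
    exact congrArg Subtype.val this
  · exfalso
    have hA2 : Associated ((auxGV_eI (F := F) i) (X i - X j))
        ((auxGV_eI (F := F) i) (X i' - X j')) := hA.map (auxGV_eI (F := F) i).toMulEquiv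
    rw [map_sub, map_sub, auxGV_eI_X_self, auxGV_eI_X_ne i j h1.ne'] at hA2
    by_cases hj'i : j' = i
    · subst hj'i
      rw [auxGV_eI_X_ne j' i' (fun h => hii h.symm), auxGV_eI_X_self] at hA2
      have hBB : Associated
          (Polynomial.C (X (⟨i', fun h => hii h.symm⟩ : {m : Fin k // m ≠ j'}))
            - (Polynomial.X : Polynomial (MvPolynomial {m : Fin k // m ≠ j'} F)))
          (Polynomial.X - Polynomial.C (X ⟨i', fun h => hii h.symm⟩)) :=
        associated_of_dvd_dvd ⟨-1, by ring⟩ ⟨-1, by ring⟩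
      have hA3 := hA2.trans hBB
      have := Polynomial.eq_of_monic_of_associated (Polynomial.monic_X_sub_C _)
        (Polynomial.monic_X_sub_C _) hA3
      have hc := Polynomial.C_injective (sub_right_injective (congrArg id this))
      have hji' : j = i' := congrArg Subtype.val (MvPolynomial.X_injective hc)
      subst hji'
      exact absurd (h1.trans h2) (lt_irrefl _)
    · rw [auxGV_eI_X_ne i i' (fun h => hii h.symm), auxGV_eI_X_ne i j' hj'i] at hA2
      rw [← map_sub] at hA2
      have hw : (X (⟨i', fun h => hii h.symm⟩ : {m : Fin k // m ≠ i})
          - X (⟨j', hj'i⟩ : {m : Fin k // m ≠ i}) : MvPolynomial {m : Fin k // m ≠ i} F) ≠ 0 := by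
        refine sub_ne_zero.mpr ?_
        intro hcon
        exact h2.ne (congrArg Subtype.val (MvPolynomial.X_injective hcon))
      have hd := hA2.dvd
      have hle := Polynomial.natDegree_le_of_dvd hd (by
        simpa using Polynomial.C_ne_zero.mpr hw)
      rw [Polynomial.natDegree_X_sub_C, Polynomial.natDegree_C] at hle
      omega


theorem auxGV_dvd_det {F : Type*} [CommRing F] {k : ℕ} (c : Fin k → ℕ) (i j : Fin k)
    (hij : i ≠ j) :
    (X i - X j : MvPolynomial (Fin k) F) ∣
      (Matrix.of fun i' j' : Fin k => (X i' : MvPolynomial (Fin k) F) ^ c j').det := by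
  classical
  set φ : MvPolynomial (Fin k) F →ₐ[F] MvPolynomial (Fin k) F :=
    aeval (fun m => if m = i then X j else X m) with hφ
  have key : ∀ f : MvPolynomial (Fin k) F, (X i - X j) ∣ (f - φ f) := by
    intro f
    induction f using MvPolynomial.induction_on with
    | C a => simp [hφ]
    | add f g hf hg =>
      have h := dvd_add hf hg
      have he : f + g - φ (f + g) = (f - φ f) + (g - φ g) := by rw [map_add]; ring
      rwa [he]
    | mul_X f m hf =>
      rw [map_mul, aeval_X]
      by_cases hm : m = i
      · subst hm
        rw [if_pos rfl]
        have he : f * X m - φ f * X j = (f - φ f) * X m + φ f * (X m - X j) := by ring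
        rw [he]
        exact dvd_add (hf.mul_right _) (Dvd.dvd.mul_left dvd_rfl _)
      · rw [if_neg hm]
        have he : f * X m - φ f * X m = (f - φ f) * X m := by ring
        rw [he]
        exact hf.mul_right _
  have hφD : φ ((Matrix.of fun i' j' : Fin k =>
      (X i' : MvPolynomial (Fin k) F) ^ c j').det) = 0 := by
    rw [AlgHom.map_det]
    apply Matrix.det_zero_of_row_eq hij
    funext j'
    simp [Matrix.map_apply, map_pow, hφ, aeval_X, hij.symm]
  have := key ((Matrix.of fun i' j' : Fin k => (X i' : MvPolynomial (Fin k) F) ^ c j').det)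
  rwa [hφD, sub_zero] at this


theorem auxGV_factor {F : Type*} [CommRing F] (s b : ℕ) (h : s < b) :
    (Polynomial.X : Polynomial F) ^ s - Polynomial.X ^ b
      = (1 - Polynomial.X) * (Polynomial.X ^ s * ∑ m ∈ range (b - s), Polynomial.X ^ m) := by
  have h1 : (∑ m ∈ range (b - s), (Polynomial.X : Polynomial F) ^ m) * (Polynomial.X - 1)
      = Polynomial.X ^ (b - s) - 1 := geom_sum_mul _ _
  have hb : (Polynomial.X : Polynomial F) ^ b = Polynomial.X ^ s * Polynomial.X ^ (b - s) := by
    rw [← pow_add, Nat.add_sub_cancel' h.le]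
  rw [hb]
  linear_combination ((Polynomial.X : Polynomial F) ^ s) * h1

theorem auxGV_main {F : Type*} [Field F] {k : ℕ} (c : Fin k → ℕ)
    (hcd : ∀ i j : Fin k, i < j → c j < c i)
    (hc0 : ∀ i j : Fin k, i < j → ((c i - c j : ℕ) : F) ≠ 0) :
    ∃ s : MvPolynomial (Fin k) F,
      (Matrix.of fun i j : Fin k => (X i : MvPolynomial (Fin k) F) ^ c j).det
        = (∏ i : Fin k, ∏ j ∈ Finset.Ioi i, (X i - X j : MvPolynomial (Fin k) F)) * s ∧
      aeval (fun _ => (1 : F)) s ≠ 0 := by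
  classical
  set D := (Matrix.of fun i j : Fin k => (X i : MvPolynomial (Fin k) F) ^ c j).det with hD
  set S : Finset (Σ _ : Fin k, Fin k) := univ.sigma (fun i => Ioi i) with hS
  have hmem : ∀ e ∈ S, e.1 < e.2 := fun e he => mem_Ioi.mp ((Finset.mem_sigma.mp he).2)
  have hVS : (∏ i : Fin k, ∏ j ∈ Ioi i, (X i - X j : MvPolynomial (Fin k) F))
      = ∏ e ∈ S, (X e.1 - X e.2 : MvPolynomial (Fin k) F) :=
    prod_sigma' univ (fun i => Ioi i) (fun i j => (X i - X j : MvPolynomial (Fin k) F))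
  have hdvd : (∏ e ∈ S, (X e.1 - X e.2 : MvPolynomial (Fin k) F)) ∣ D := by
    apply auxGV_prod_primes_dvd
    · intro e he; exact auxGV_prime e.1 e.2 (hmem e he).ne
    · intro e he e' he' hne hassoc
      obtain ⟨hh1, hh2⟩ := auxGV_nonassoc e.1 e.2 e'.1 e'.2 (hmem e he) (hmem e' he') hassoc
      exact hne (Sigma.ext hh1 (heq_of_eq hh2))
    · intro e he; exact auxGV_dvd_det c e.1 e.2 (hmem e he).ne
  obtain ⟨s, hs⟩ := hdvd
  refine ⟨s, by rw [hVS, hs], ?_⟩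
  set ψ : MvPolynomial (Fin k) F →ₐ[F] Polynomial F :=
    aeval (fun i : Fin k => (Polynomial.X : Polynomial F) ^ (i : ℕ)) with hψ
  have hψD : ψ D = ∏ e ∈ S, ((Polynomial.X : Polynomial F) ^ c e.2 - Polynomial.X ^ c e.1) := by
    rw [hD, AlgHom.map_det]
    have hmat : ψ.mapMatrix (Matrix.of fun i j : Fin k => (X i : MvPolynomial (Fin k) F) ^ c j)
        = (Matrix.vandermonde fun j : Fin k => (Polynomial.X : Polynomial F) ^ c j).transpose := by
      ext i j
      simp [AlgHom.mapMatrix_apply, Matrix.map_apply, Matrix.transpose_apply,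
        Matrix.vandermonde, map_pow, hψ, aeval_X, ← pow_mul, mul_comm]
    rw [hmat, Matrix.det_transpose, Matrix.det_vandermonde]
    exact prod_sigma' univ (fun i => Ioi i)
      (fun i j => (Polynomial.X : Polynomial F) ^ c j - Polynomial.X ^ c i)
  have hψV : ψ (∏ e ∈ S, (X e.1 - X e.2 : MvPolynomial (Fin k) F))
      = ∏ e ∈ S, ((Polynomial.X : Polynomial F) ^ (e.1 : ℕ) - Polynomial.X ^ (e.2 : ℕ)) := by
    rw [map_prod]
    refine Finset.prod_congr rfl fun e he => ?_
    simp [hψ, aeval_X]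
  have hEq : (∏ e ∈ S, ((Polynomial.X : Polynomial F) ^ c e.2 - Polynomial.X ^ c e.1))
      = (∏ e ∈ S, ((Polynomial.X : Polynomial F) ^ (e.1 : ℕ) - Polynomial.X ^ (e.2 : ℕ))) * ψ s := by
    rw [← hψD, ← hψV, ← map_mul, ← hs]
  set N := S.card with hN
  set A : (Σ _ : Fin k, Fin k) → Polynomial F := fun e =>
    Polynomial.X ^ c e.2 * ∑ m ∈ range (c e.1 - c e.2), Polynomial.X ^ m with hA
  set B : (Σ _ : Fin k, Fin k) → Polynomial F := fun e =>
    Polynomial.X ^ (e.1 : ℕ) * ∑ m ∈ range ((e.2 : ℕ) - (e.1 : ℕ)), Polynomial.X ^ m with hB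
  have hEq2 : ((1 : Polynomial F) - Polynomial.X) ^ N * (∏ e ∈ S, A e)
      = ((1 : Polynomial F) - Polynomial.X) ^ N * ((∏ e ∈ S, B e) * ψ s) := by
    calc ((1 : Polynomial F) - Polynomial.X) ^ N * (∏ e ∈ S, A e)
        = ∏ e ∈ S, ((Polynomial.X : Polynomial F) ^ c e.2 - Polynomial.X ^ c e.1) := by
          rw [← Finset.prod_const, ← Finset.prod_mul_distrib]
          exact Finset.prod_congr rfl fun e he =>
            (auxGV_factor (c e.2) (c e.1) (hcd _ _ (hmem e he))).symm
      _ = (∏ e ∈ S, ((Polynomial.X : Polynomial F) ^ (e.1 : ℕ) - Polynomial.X ^ (e.2 : ℕ))) * ψ s := hEq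
      _ = (((1 : Polynomial F) - Polynomial.X) ^ N * (∏ e ∈ S, B e)) * ψ s := by
          rw [← Finset.prod_const, ← Finset.prod_mul_distrib]
          congr 1
          exact Finset.prod_congr rfl fun e he => auxGV_factor (e.1 : ℕ) (e.2 : ℕ) (hmem e he)
      _ = ((1 : Polynomial F) - Polynomial.X) ^ N * ((∏ e ∈ S, B e) * ψ s) := by ring
  have hX1 : ((1 : Polynomial F) - Polynomial.X) ^ N ≠ 0 := by
    apply pow_ne_zero
    intro h0
    have := congrArg (Polynomial.eval (0 : F)) h0
    simp at this
  have hEq3 := mul_left_cancel₀ hX1 hEq2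
  have hEv := congrArg (Polynomial.eval (1 : F)) hEq3
  rw [Polynomial.eval_mul, Polynomial.eval_prod, Polynomial.eval_prod] at hEv
  have hev1 : ∀ e ∈ S, Polynomial.eval (1 : F) (A e) = ((c e.1 - c e.2 : ℕ) : F) := by
    intro e he
    simp [hA, Polynomial.eval_finset_sum]
  have hev2 : ∀ e ∈ S, Polynomial.eval (1 : F) (B e) = (((e.2 : ℕ) - (e.1 : ℕ) : ℕ) : F) := by
    intro e he
    simp [hB, Polynomial.eval_finset_sum]
  rw [Finset.prod_congr rfl hev1, Finset.prod_congr rfl hev2] at hEv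
  have hL : (∏ e ∈ S, ((c e.1 - c e.2 : ℕ) : F)) ≠ 0 :=
    Finset.prod_ne_zero_iff.mpr (fun e he => hc0 _ _ (hmem e he))
  have hsne : Polynomial.eval 1 (ψ s) ≠ 0 := by
    intro h0
    rw [h0, mul_zero] at hEv
    exact hL hEv
  have hcomp : (Polynomial.aeval (1 : F)).comp ψ = aeval (fun _ : Fin k => (1 : F)) := by
    apply MvPolynomial.algHom_ext
    intro i
    simp [hψ]
  have htrans : aeval (fun _ : Fin k => (1 : F)) s = Polynomial.eval 1 (ψ s) := by
    rw [← hcomp]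
    simp [AlgHom.comp_apply, Polynomial.coe_aeval_eq_eval]
  rw [htrans]
  exact hsne

theorem auxGV_mem_span {F : Type*} [CommRing F] {R : Type*} [CommRing R] [Algebra F R]
    {k : ℕ} (x : Fin k → R) (f : MvPolynomial (Fin k) F) :
    aeval x f - algebraMap F R (aeval (fun _ => (1 : F)) f)
      ∈ Ideal.span (Set.range fun i => x i - 1) := by
  induction f using MvPolynomial.induction_on with
  | C a => simp
  | add f g hf hg =>
    have he : aeval x (f + g) - algebraMap F R (aeval (fun _ => (1 : F)) (f + g))
        = (aeval x f - algebraMap F R (aeval (fun _ => (1 : F)) f))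
          + (aeval x g - algebraMap F R (aeval (fun _ => (1 : F)) g)) := by
      rw [map_add, map_add, map_add]; ring
    rw [he]; exact Ideal.add_mem _ hf hg
  | mul_X f i hf =>
    have he : aeval x (f * X i) - algebraMap F R (aeval (fun _ => (1 : F)) (f * X i))
        = (aeval x f) * (x i - 1)
          + (aeval x f - algebraMap F R (aeval (fun _ => (1 : F)) f)) := by
      rw [map_mul, map_mul, aeval_X, aeval_X, map_mul]; simp; ring
    rw [he]
    exact Ideal.add_mem _ (Ideal.mul_mem_left _ _ (Ideal.subset_span ⟨i, rfl⟩)) hf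

theorem auxGV_isUnit {F : Type*} [Field F] {R : Type*} [CommRing R] [Algebra F R]
    {k : ℕ} (x : Fin k → R) (hx : ∀ i, IsNilpotent (x i - 1))
    (s : MvPolynomial (Fin k) F) (hs : aeval (fun _ => (1 : F)) s ≠ 0) :
    IsUnit (aeval x s) := by
  have hmem := auxGV_mem_span x s
  have hnil : IsNilpotent (aeval x s - algebraMap F R (aeval (fun _ => (1 : F)) s)) := by
    have hsub : Ideal.span (Set.range fun i => x i - 1) ≤ nilradical R := by
      rw [Ideal.span_le]
      rintro y ⟨i, rfl⟩
      exact mem_nilradical.mpr (hx i)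
    exact mem_nilradical.mp (hsub hmem)
  have hu : IsUnit (algebraMap F R (aeval (fun _ => (1 : F)) s)) :=
    (hs.isUnit).map (algebraMap F R)
  have := hnil.isUnit_add_right_of_commute hu (Commute.all _ _)
  simpa using this

/-- Let `G = C_p^k` with generators `x_1,…,x_k` and let `0 ≤ b_1 < … < b_k ≤ p-1`.
In `𝔽_p[G]`, the determinant of the matrix `N_β(i,j) = x_i^{-b_j}` (where
`x^{-b}` means `x^{p-b}`) equals `w_β · ∏_{1≤i<j≤k}(x_i - x_j)` with `w_β` a unit. -/
theorem det_generalized_vandermonde_group_algebra (p k : ℕ) (hp : p.Prime) [Fact p.Prime]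
    (hk : k < p) (b : Fin k → ℕ) (hb : StrictMono b) (hbp : ∀ j, b j ≤ p - 1) :
    ∃ w : MonoidAlgebra (ZMod p) (Multiplicative (Fin k → ZMod p)), IsUnit w ∧
      Matrix.det (Matrix.of fun i j : Fin k =>
        (MonoidAlgebra.of (ZMod p) (Multiplicative (Fin k → ZMod p))
            (Multiplicative.ofAdd (Pi.single i 1))) ^ (p - b j)) =
      w * ∏ i : Fin k, ∏ j ∈ Finset.Ioi i,
        ((MonoidAlgebra.of (ZMod p) (Multiplicative (Fin k → ZMod p))
            (Multiplicative.ofAdd (Pi.single i 1))) -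
         (MonoidAlgebra.of (ZMod p) (Multiplicative (Fin k → ZMod p))
            (Multiplicative.ofAdd (Pi.single j 1)))) := by
  classical
  haveI : NeZero p := ⟨hp.ne_zero⟩
  set R := MonoidAlgebra (ZMod p) (Multiplicative (Fin k → ZMod p)) with hR
  set x : Fin k → R := fun i =>
    MonoidAlgebra.of (ZMod p) (Multiplicative (Fin k → ZMod p))
      (Multiplicative.ofAdd (Pi.single i 1)) with hx
  haveI : CharP R p := charP_of_injective_algebraMap' (ZMod p) (A := R) p
  have hxp : ∀ i, x i ^ p = 1 := by
    intro i
    rw [hx]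
    simp only
    rw [← map_pow, ← ofAdd_nsmul]
    have h2 : p • Pi.single i (1 : ZMod p) = (0 : Fin k → ZMod p) := by
      funext j
      rw [Pi.smul_apply]
      by_cases hji : j = i
      · subst hji
        simp [Pi.single_apply, nsmul_eq_mul, ZMod.natCast_self]
      · simp [Pi.single_apply, hji]
    rw [h2, ofAdd_zero, map_one]
  have hxnil : ∀ i, IsNilpotent (x i - 1) := by
    intro i
    refine ⟨p, ?_⟩
    rw [sub_pow_char, hxp i, one_pow, sub_self]
  set c : Fin k → ℕ := fun j => p - b j with hc
  have hcd : ∀ i j : Fin k, i < j → c j < c i := by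
    intro i j hij
    have h1 := hb hij
    have h2 := hbp j
    have h3 := hp.two_le
    simp only [hc]
    omega
  have hc0 : ∀ i j : Fin k, i < j → ((c i - c j : ℕ) : ZMod p) ≠ 0 := by
    intro i j hij h0
    have h1 := hb hij
    have h2 := hbp j
    have h3 := hp.two_le
    have hd : c i - c j = b j - b i := by
      simp only [hc]
      omega
    rw [hd] at h0
    have hdvd := (ZMod.natCast_eq_zero_iff _ p).mp h0
    have := Nat.le_of_dvd (by omega) hdvd
    omega
  obtain ⟨s, hDeq, hs1⟩ := auxGV_main (F := ZMod p) c hcd hc0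
  refine ⟨aeval x s, auxGV_isUnit x hxnil s hs1, ?_⟩
  have hmap := congrArg (aeval (R := ZMod p) (S₁ := R) x) hDeq
  rw [AlgHom.map_det] at hmap
  have hM : (aeval (R := ZMod p) (S₁ := R) x).mapMatrix
        (Matrix.of fun i j : Fin k => (X i : MvPolynomial (Fin k) (ZMod p)) ^ c j)
      = Matrix.of (fun i j : Fin k => x i ^ (p - b j)) := by
    ext i j
    simp [AlgHom.mapMatrix_apply, Matrix.map_apply, map_pow, aeval_X, hc]
  rw [hM] at hmap
  simp only [map_mul, map_prod, map_sub, aeval_X] at hmap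
  rw [mul_comm] at hmap
  exact hmap
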